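/- Let k be a commutative ring, let R → A be a homomorphism of commutative k-algebras, and let n ≥ 1. Regard the n-fold tensor power A^{⊗_k n} as an algebra over the n-fold tensor power R^{⊗_k n} via the map induced by R → A in each factor, and regard R as an R^{⊗_k n}-algebra via the iterated multiplication map R^{⊗_k n} → R. Then the canonical map A^{⊗_k n} ⊗_{R^{⊗_k n}} R → A^{⊗_R n}, determined by (a_1 ⊗ ⋯ ⊗ a_n) ⊗ r ↦ a_1 ⊗ ⋯ ⊗ (a_n · r), is an isomorphism of commutative rings. -/

import Mathlib

set_option maxHeartbeats 1000000
set_option synthInstance.maxHeartbeats 400000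


open scoped TensorProduct

open PiTensorProduct

/-- For a homomorphism `R → A` of commutative `k`-algebras and `n ≥ 1`, the
canonical map `A^{⊗_k n} ⊗_{R^{⊗_k n}} R → A^{⊗_R n}`, determined by
`(a_1 ⊗ ⋯ ⊗ a_n) ⊗ r ↦ a_1 ⊗ ⋯ ⊗ (a_n · r)`, is an isomorphism of commutative
rings.  Here `A^{⊗_k n}` is an `R^{⊗_k n}`-algebra via the map induced by
`R → A` in each factor, and `R` is an `R^{⊗_k n}`-algebra via the iterated
multiplication map. -/
theorem tensor_power_base_change_iso (k R A : Type) [CommRing k] [CommRing R]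
    [CommRing A] [Algebra k R] [Algebra k A] (f : R →ₐ[k] A)
    (n : ℕ) (hn : 1 ≤ n)
    -- the map `R^{⊗_k n} → A^{⊗_k n}` induced by `f` in each factor
    (g : (⨂[k] _ : Fin n, R) →+* (⨂[k] _ : Fin n, A))
    (hg : ∀ r : Fin n → R, g (⨂ₜ[k] i, r i) = ⨂ₜ[k] i, f (r i))
    -- the iterated multiplication map `R^{⊗_k n} → R`
    (m : (⨂[k] _ : Fin n, R) →+* R)
    (hm : ∀ r : Fin n → R, m (⨂ₜ[k] i, r i) = ∏ i, r i) :
    -- `A` is an `R`-algebra via `f`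
    letI : Algebra R A := f.toRingHom.toAlgebra
    letI : Algebra (⨂[k] _ : Fin n, R) (⨂[k] _ : Fin n, A) := g.toAlgebra
    letI : Algebra (⨂[k] _ : Fin n, R) R := m.toAlgebra
    ∃ e : ((⨂[k] _ : Fin n, A) ⊗[⨂[k] _ : Fin n, R] R) ≃+* (⨂[R] _ : Fin n, A),
      ∀ (a : Fin n → A) (r : R),
        e ((⨂ₜ[k] i, a i) ⊗ₜ[⨂[k] _ : Fin n, R] r) =
          ⨂ₜ[R] i, Function.update a ⟨n - 1, by omega⟩ (a ⟨n - 1, by omega⟩ * f r) i := by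
  classical
  letI : Algebra R A := f.toRingHom.toAlgebra
  letI : Algebra (⨂[k] _ : Fin n, R) (⨂[k] _ : Fin n, A) := g.toAlgebra
  letI : Algebra (⨂[k] _ : Fin n, R) R := m.toAlgebra
  haveI : IsScalarTower k R A :=
    IsScalarTower.of_algebraMap_eq fun c => (f.commutes c).symm
  letI : Algebra (⨂[k] _ : Fin n, R) (⨂[R] _ : Fin n, A) :=
    ((algebraMap R (⨂[R] _ : Fin n, A)).comp m).toAlgebra
  letI : Algebra R ((⨂[k] _ : Fin n, A) ⊗[⨂[k] _ : Fin n, R] R) :=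
    Algebra.TensorProduct.rightAlgebra
  have i0 : Fin n := ⟨0, hn⟩
  have hfA : ∀ r : R, algebraMap R A r = f r := fun _ => rfl
  -- the `k`-multilinear map underlying `tprod R`
  have hsmulA : ∀ (c : k) (a : Fin n → A),
      c • tprod k a = tprod k (Function.update a i0 (c • a i0)) := by
    intro c a
    rw [MultilinearMap.map_update_smul, Function.update_eq_self]
  have hsmulR : ∀ (c : k) (r : Fin n → R),
      c • tprod k r = tprod k (Function.update r i0 (c • r i0)) := by
    intro c r
    rw [MultilinearMap.map_update_smul, Function.update_eq_self]
  have hsmulAR : ∀ (c : R) (a : Fin n → A) (i : Fin n),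
      c • tprod R a = tprod R (Function.update a i (c • a i)) := by
    intro c a i
    rw [MultilinearMap.map_update_smul, Function.update_eq_self]
  -- the forward algebra map `A^{⊗_k n} → A^{⊗_R n}`
  let t : MultilinearMap k (fun _ : Fin n => A) (⨂[R] _ : Fin n, A) :=
    (PiTensorProduct.tprod R).restrictScalars k
  let φ0 : (⨂[k] _ : Fin n, A) →ₐ[k] (⨂[R] _ : Fin n, A) :=
    PiTensorProduct.liftAlgHom t rfl (fun x y => (tprod_mul_tprod x y).symm)
  have hφ0 : ∀ a : Fin n → A, φ0 (tprod k a) = tprod R a := by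
    intro a
    show PiTensorProduct.lift t ((PiTensorProduct.tprod k) a) = _
    rw [lift.tprod]
    rfl
  -- compatibility over `R^{⊗_k n}`
  have hcomp : ∀ s : ⨂[k] _ : Fin n, R,
      φ0 (g s) = algebraMap R (⨂[R] _ : Fin n, A) (m s) := by
    have htp : ∀ r : Fin n → R,
        φ0 (g (tprod k r)) = algebraMap R (⨂[R] _ : Fin n, A) (m (tprod k r)) := by
      intro r
      rw [hg, hφ0, hm]
      have h1 : (fun i => f (r i)) = fun i => r i • (1 : A) := by
        funext i
        rw [Algebra.smul_def, hfA, mul_one]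
      rw [h1, MultilinearMap.map_smul_univ, Algebra.algebraMap_eq_smul_one]
      rfl
    intro s
    induction s using PiTensorProduct.induction_on with
    | smul_tprod c r => rw [hsmulR, htp]
    | add x y hx hy => rw [map_add, map_add, map_add, hx, hy]; rw [← map_add]
  let φA : (⨂[k] _ : Fin n, A) →ₐ[⨂[k] _ : Fin n, R] (⨂[R] _ : Fin n, A) :=
    { toRingHom := φ0.toRingHom, commutes' := hcomp }
  let ψ1 : R →ₐ[⨂[k] _ : Fin n, R] (⨂[R] _ : Fin n, A) :=
    { toRingHom := algebraMap R (⨂[R] _ : Fin n, A), commutes' := fun _ => rfl }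
  haveI : IsScalarTower (⨂[k] _ : Fin n, R) (⨂[k] _ : Fin n, R)
      (⨂[R] _ : Fin n, A) := IsScalarTower.left _
  haveI : IsScalarTower (⨂[k] _ : Fin n, R) (⨂[k] _ : Fin n, R)
      (⨂[k] _ : Fin n, A) := IsScalarTower.left _
  let φ : ((⨂[k] _ : Fin n, A) ⊗[⨂[k] _ : Fin n, R] R)
      →ₐ[⨂[k] _ : Fin n, R] (⨂[R] _ : Fin n, A) :=
    Algebra.TensorProduct.productMap φA ψ1
  have hφ : ∀ (x : ⨂[k] _ : Fin n, A) (r : R),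
      φ (x ⊗ₜ r) = φ0 x * algebraMap R (⨂[R] _ : Fin n, A) r := fun x r => rfl
  -- the backward map
  let ψm : MultilinearMap R (fun _ : Fin n => A)
      ((⨂[k] _ : Fin n, A) ⊗[⨂[k] _ : Fin n, R] R) :=
    { toFun := fun a => (tprod k a) ⊗ₜ (1 : R)
      map_update_add' := fun a i x y => by
        simp only [MultilinearMap.map_update_add, TensorProduct.add_tmul]
      map_update_smul' := fun a i r x => by
        have h1 : Function.update a i (r • x) =
            (fun j => f (Function.update (1 : Fin n → R) i r j)) *
              Function.update a i x := by
          funext j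
          rcases eq_or_ne j i with h | h
          · subst h
            simp only [Function.update_self, Pi.mul_apply, Algebra.smul_def, hfA]
          · simp only [Function.update_of_ne h, Pi.one_apply, Pi.mul_apply,
              _root_.map_one, one_mul]
        have hgs : ∀ (s : ⨂[k] _ : Fin n, R) (y : ⨂[k] _ : Fin n, A),
            g s * y = s • y := fun s y => (Algebra.smul_def s y).symm
        rw [h1, ← tprod_mul_tprod, ← hg, hgs, TensorProduct.smul_tmul]
        have h2 : (PiTensorProduct.tprod k (Function.update (1 : Fin n → R) i r)) •
            (1 : R) = r := by
          show m _ * 1 = r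
          rw [mul_one, hm, Finset.prod_update_of_mem (Finset.mem_univ i)]
          simp
        rw [h2, Algebra.smul_def]
        show _ = ((1 : ⨂[k] _ : Fin n, A) ⊗ₜ[⨂[k] _ : Fin n, R] r) * _
        rw [Algebra.TensorProduct.tmul_mul_tmul, one_mul, mul_one] }
  let ψ : (⨂[R] _ : Fin n, A)
      →ₐ[R] ((⨂[k] _ : Fin n, A) ⊗[⨂[k] _ : Fin n, R] R) :=
    PiTensorProduct.liftAlgHom ψm rfl (fun x y => by
      simp only [ψm, MultilinearMap.coe_mk, ← tprod_mul_tprod,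
        Algebra.TensorProduct.tmul_mul_tmul, mul_one])
  have hψ : ∀ a : Fin n → A, ψ (tprod R a) = (tprod k a) ⊗ₜ (1 : R) := by
    intro a
    show PiTensorProduct.lift ψm ((PiTensorProduct.tprod R) a) = _
    rw [lift.tprod]
    rfl
  -- `φ ∘ ψ = id`
  have h1 : ∀ z, φ (ψ z) = z := by
    have htp : ∀ a : Fin n → A, φ (ψ (tprod R a)) = tprod R a := by
      intro a
      rw [hψ, hφ, _root_.map_one, mul_one, hφ0]
    intro z
    induction z using PiTensorProduct.induction_on with
    | smul_tprod c a => rw [hsmulAR c a i0, htp]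
    | add x y hx hy => rw [map_add, map_add, hx, hy]
  -- `ψ ∘ φ = id`
  have h2 : ∀ z, ψ (φ z) = z := by
    have hA : ∀ x : ⨂[k] _ : Fin n, A, ψ (φ0 x) = x ⊗ₜ (1 : R) := by
      intro x
      induction x using PiTensorProduct.induction_on with
      | smul_tprod c a => rw [hsmulA, hφ0, hψ]
      | add x y hx hy => rw [map_add, map_add, hx, hy, TensorProduct.add_tmul]
    intro z
    induction z using TensorProduct.induction_on with
    | zero => rw [map_zero, map_zero]
    | tmul x r =>
        rw [hφ, _root_.map_mul, hA]
        have hr : ψ (algebraMap R (⨂[R] _ : Fin n, A) r) =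
            (1 : ⨂[k] _ : Fin n, A) ⊗ₜ r := ψ.commutes r
        rw [hr, Algebra.TensorProduct.tmul_mul_tmul, one_mul, mul_one]
    | add x y hx hy => rw [map_add, map_add, hx, hy]
  refine ⟨RingEquiv.ofRingHom φ.toRingHom ψ.toRingHom
      (RingHom.ext h1) (RingHom.ext h2), ?_⟩
  intro a r
  show φ ((tprod k a) ⊗ₜ r) = _
  rw [hφ, hφ0, mul_comm, ← Algebra.smul_def,
    hsmulAR r a ⟨n - 1, by omega⟩]
  congr 1
  rw [Algebra.smul_def, hfA, mul_comm]
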